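/- arXiv:2604.04119 — 2 statements merged into one kernel-verified Lean document; each statement's English description precedes it below -/
import Mathlib

section
/- Let A, B, C be three points in ℝ², and let S be a point such that the three unit vectors from S toward A, B, C sum to zero (the 120° condition), with S distinct from A, B, C. Then S is a critical point, and in fact a global minimizer, of the function h(x) = dist(x,A) + dist(x,B) + dist(x,C) (S is the Fermat point). -/
local notation "E" => EuclideanSpace ℝ (Fin 2)

lemma aux_key (P S x : E) (h : S ≠ P) :
    ‖S - P‖ + inner ℝ ((‖P - S‖)⁻¹ • (P - S)) (S - x) ≤ ‖x - P‖ := by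
  have hn : ‖P - S‖ ≠ 0 := by
    simp [sub_eq_zero]; exact fun e => h e.symm
  have hcs : inner ℝ ((‖P - S‖)⁻¹ • (P - S)) (P - x) ≤ ‖x - P‖ := by
    calc inner ℝ ((‖P - S‖)⁻¹ • (P - S)) (P - x)
        ≤ ‖(‖P - S‖)⁻¹ • (P - S)‖ * ‖P - x‖ := real_inner_le_norm _ _
      _ = ‖x - P‖ := by
          rw [norm_smul, norm_inv, norm_norm, inv_mul_cancel₀ hn, one_mul, norm_sub_rev]
  have hexp : (inner ℝ ((‖P - S‖)⁻¹ • (P - S)) (P - x) : ℝ)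
      = inner ℝ ((‖P - S‖)⁻¹ • (P - S)) (P - S) + inner ℝ ((‖P - S‖)⁻¹ • (P - S)) (S - x) := by
    rw [← inner_add_right]
    congr 1
    abel
  have hself : (inner ℝ ((‖P - S‖)⁻¹ • (P - S)) (P - S) : ℝ) = ‖S - P‖ := by
    rw [real_inner_smul_left, real_inner_self_eq_norm_sq, norm_sub_rev S P]
    field_simp
  rw [hexp, hself] at hcs
  exact hcs

/-- If the unit vectors from `S` toward `A`, `B`, `C` sum to zero (the 120° condition),
then `S` is a global minimizer of `h(x) = dist x A + dist x B + dist x C`,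
i.e. `S` is the Fermat point (in particular a critical point of `h`). -/
theorem fermat_point_of_tangent_sum_zero
    (A B C S : E) (hA : S ≠ A) (hB : S ≠ B) (hC : S ≠ C)
    (h120 : (‖A - S‖)⁻¹ • (A - S) + (‖B - S‖)⁻¹ • (B - S) + (‖C - S‖)⁻¹ • (C - S) = 0) :
    ∀ x : E, dist S A + dist S B + dist S C ≤ dist x A + dist x B + dist x C := by
  intro x
  have h1 := aux_key A S x hA
  have h2 := aux_key B S x hB
  have h3 := aux_key C S x hC
  have hsum : (inner ℝ ((‖A - S‖)⁻¹ • (A - S)) (S - x) : ℝ)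
      + inner ℝ ((‖B - S‖)⁻¹ • (B - S)) (S - x)
      + inner ℝ ((‖C - S‖)⁻¹ • (C - S)) (S - x) = 0 := by
    rw [← inner_add_left, ← inner_add_left, h120, inner_zero_left]
  simp only [dist_eq_norm]
  linarith
end

section
/- The function h(x) = dist(x,A) + dist(x,B) + dist(x,C) on ℝ² is convex and 3-Lipschitz, and if it attains a local minimum at a point S distinct from A, B, C, then the sum of the unit vectors from S to A, B, C equals zero. -/
local notation "E" => EuclideanSpace ℝ (Fin 2)

lemma hasFDerivAt_norm' {F : Type*} [NormedAddCommGroup F] [InnerProductSpace ℝ F]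
    (x : F) (hx : x ≠ 0) :
    HasFDerivAt (fun y : F => ‖y‖) ((‖x‖)⁻¹ • innerSL ℝ x) x := by
  have h1 : HasFDerivAt (fun y : F => ‖y‖ ^ 2) (2 • innerSL ℝ x) x :=
    (hasStrictFDerivAt_norm_sq x).hasFDerivAt
  have h2 : (‖x‖ ^ 2) ≠ 0 := pow_ne_zero 2 (norm_ne_zero_iff.mpr hx)
  have h3 := (Real.hasDerivAt_sqrt h2).comp_hasFDerivAt x h1
  have key : (fun y : F => Real.sqrt (‖y‖ ^ 2)) = fun y : F => ‖y‖ := by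
    funext y; rw [Real.sqrt_sq (norm_nonneg y)]
  simp only [Function.comp_def] at h3
  rw [key] at h3
  refine h3.congr_fderiv ?_
  rw [Real.sqrt_sq (norm_nonneg x)]
  ext v
  simp [smul_smul]
  ring

lemma hasFDerivAt_dist' {F : Type*} [NormedAddCommGroup F] [InnerProductSpace ℝ F]
    (a x : F) (hx : x ≠ a) :
    HasFDerivAt (fun y : F => dist y a) ((‖x - a‖)⁻¹ • innerSL ℝ (x - a)) x := by
  have h1 : HasFDerivAt (fun y : F => y - a) (ContinuousLinearMap.id ℝ F) x :=
    (hasFDerivAt_id x).sub_const a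
  have h2 := (hasFDerivAt_norm' (x - a) (sub_ne_zero.mpr hx)).comp x h1
  simpa [dist_eq_norm, Function.comp_def] using h2

/-- `h(x) = dist x A + dist x B + dist x C` is convex and 3-Lipschitz, and if it has a
local minimum at `S` distinct from `A, B, C`, then the unit vectors from `S` to
`A, B, C` sum to zero. -/
theorem distance_sum_convex_lipschitz_and_critical
    (A B C : E) :
    ConvexOn ℝ Set.univ (fun x : E => dist x A + dist x B + dist x C) ∧
    LipschitzWith 3 (fun x : E => dist x A + dist x B + dist x C) ∧
    (∀ S : E, S ≠ A → S ≠ B → S ≠ C →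
      IsLocalMin (fun x : E => dist x A + dist x B + dist x C) S →
      (‖A - S‖)⁻¹ • (A - S) + (‖B - S‖)⁻¹ • (B - S) + (‖C - S‖)⁻¹ • (C - S) = 0) := by
  refine ⟨((convexOn_univ_dist A).add (convexOn_univ_dist B)).add (convexOn_univ_dist C), ?_, ?_⟩
  · have : (3 : NNReal) = 1 + 1 + 1 := by norm_num
    rw [this]
    exact ((LipschitzWith.dist_left A).add (LipschitzWith.dist_left B)).add
      (LipschitzWith.dist_left C)
  · intro S hA hB hC hmin
    have hD : HasFDerivAt (fun x : E => dist x A + dist x B + dist x C)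
        (((‖S - A‖)⁻¹ • innerSL ℝ (S - A) + (‖S - B‖)⁻¹ • innerSL ℝ (S - B)) +
          (‖S - C‖)⁻¹ • innerSL ℝ (S - C)) S :=
      ((hasFDerivAt_dist' A S hA).add (hasFDerivAt_dist' B S hB)).add (hasFDerivAt_dist' C S hC)
    have hz := hmin.hasFDerivAt_eq_zero hD
    set w : E := (‖S - A‖)⁻¹ • (S - A) + (‖S - B‖)⁻¹ • (S - B) + (‖S - C‖)⁻¹ • (S - C) with hw
    have hinner : innerSL ℝ w = 0 := by
      ext v
      have h := ContinuousLinearMap.ext_iff.mp hz v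
      simp only [ContinuousLinearMap.add_apply, ContinuousLinearMap.smul_apply, innerSL_apply_apply,
        ContinuousLinearMap.zero_apply, smul_eq_mul] at h
      simp only [innerSL_apply_apply, ContinuousLinearMap.zero_apply, hw, inner_add_left,
        real_inner_smul_left]
      linarith
    have hw0 : w = 0 := by
      have h := ContinuousLinearMap.ext_iff.mp hinner w
      simp only [innerSL_apply_apply, ContinuousLinearMap.zero_apply] at h
      exact inner_self_eq_zero.mp h
    have e1 : (‖A - S‖)⁻¹ • (A - S) = -((‖S - A‖)⁻¹ • (S - A)) := by
      rw [← neg_sub S A, norm_neg, smul_neg]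
    have e2 : (‖B - S‖)⁻¹ • (B - S) = -((‖S - B‖)⁻¹ • (S - B)) := by
      rw [← neg_sub S B, norm_neg, smul_neg]
    have e3 : (‖C - S‖)⁻¹ • (C - S) = -((‖S - C‖)⁻¹ • (S - C)) := by
      rw [← neg_sub S C, norm_neg, smul_neg]
    have hsum : (‖S - A‖)⁻¹ • (S - A) + (‖S - B‖)⁻¹ • (S - B) + (‖S - C‖)⁻¹ • (S - C) = 0 :=
      hw ▸ hw0
    rw [e1, e2, e3, ← neg_add, ← neg_add, hsum, neg_zero]
end
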